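/- In the regularised RBM construction, for any non-represented visible configuration v' ∉ Ω, the minimum of E(v', h) over hidden configurations h ∈ {-1,1}^H equals E_0 = -2A ∑_α (V - λ_α), attained at h = -e. -/
import Mathlib


open Finset

/-- Energy of the regularised RBM with weights `W j α = 2 A v α j`, zero visible
biases and hidden biases `c α = 2 A (λ α - V)`. -/
noncomputable def raEnergy {V H : ℕ} (A : ℝ) (lam : Fin H → ℝ)
    (v : Fin H → Fin V → ℝ) (x : Fin V → ℝ) (h : Fin H → ℝ) : ℝ :=
  -(∑ j, ∑ α, x j * (2 * A * v α j) * h α)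
    - ∑ α, (2 * A * (lam α - (V : ℝ))) * h α

/-- Overlap `S α η = v^α · v^η`. -/
noncomputable def raOverlap {V H : ℕ} (v : Fin H → Fin V → ℝ) (α η : Fin H) : ℝ :=
  ∑ j, v α j * v η j

lemma dot_le_of_ne {V : ℕ} (x y : Fin V → ℝ)
    (hx : ∀ j, x j = 1 ∨ x j = -1) (hy : ∀ j, y j = 1 ∨ y j = -1)
    (hne : x ≠ y) : ∑ j, x j * y j ≤ (V : ℝ) - 2 := by
  obtain ⟨j0, hj0⟩ := Function.ne_iff.mp hne
  have hterm : ∀ j, x j * y j ≤ 1 := by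
    intro j
    rcases hx j with h | h <;> rcases hy j with h' | h' <;> simp [h, h']
  have hj0v : x j0 * y j0 = -1 := by
    rcases hx j0 with h | h <;> rcases hy j0 with h' | h' <;>
      simp [h, h'] at hj0 ⊢
  have hVpos : 1 ≤ V := j0.pos
  have hsum : ∑ j ∈ univ.erase j0, x j * y j ≤ (V : ℝ) - 1 := by
    calc ∑ j ∈ univ.erase j0, x j * y j
        ≤ ∑ _j ∈ univ.erase j0, (1 : ℝ) := Finset.sum_le_sum (fun j _ => hterm j)
      _ = ((univ.erase j0).card : ℝ) := by simp
      _ = (V : ℝ) - 1 := by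
          rw [Finset.card_erase_of_mem (Finset.mem_univ j0)]
          rw [Finset.card_univ, Fintype.card_fin]
          push_cast [Nat.cast_sub hVpos]
          ring
  rw [← Finset.add_sum_erase _ _ (Finset.mem_univ j0), hj0v]
  linarith

theorem regularised_nonrepresented_min_energy
    (V H : ℕ) (A : ℝ) (hA : 0 < A) (lam : Fin H → ℝ)
    (hlam : ∀ α, 3 / 4 < lam α ∧ lam α < 5 / 4)
    (v : Fin H → Fin V → ℝ)
    (hpm : ∀ η j, v η j = 1 ∨ v η j = -1)
    (hdist : Function.Injective v)
    (hneg : ∀ η, ∃ η', ∀ j, v η' j = -(v η j))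
    (v' : Fin V → ℝ)
    (hv'pm : ∀ j, v' j = 1 ∨ v' j = -1)
    (hv' : ∀ η, v' ≠ v η) :
    let E0 : ℝ := -2 * A * ∑ α, ((V : ℝ) - lam α)
    -- E0 is a lower bound over all ±1 hidden configurations ...
    (∀ h : Fin H → ℝ, (∀ α, h α = 1 ∨ h α = -1) →
      E0 ≤ raEnergy A lam v v' h) ∧
    -- ... attained at the all-(-1) hidden configuration
    raEnergy A lam v v' (fun _ => (-1 : ℝ)) = E0 := by
  intro E0
  -- the negation map
  set σ : Fin H → Fin H := fun α => Classical.choose (hneg α) with hσdef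
  have hσ : ∀ α j, v (σ α) j = -(v α j) := fun α => Classical.choose_spec (hneg α)
  have hσinv : Function.Involutive σ := by
    intro α
    apply hdist
    funext j
    rw [hσ, hσ, neg_neg]
  -- overlaps with v'
  set S : Fin H → ℝ := fun α => ∑ j, v' j * v α j with hSdef
  have hSσ : ∀ α, S (σ α) = -S α := by
    intro α
    simp only [hSdef, ← Finset.sum_neg_distrib]
    exact Finset.sum_congr rfl (fun j _ => by rw [hσ]; ring)
  have hSle : ∀ α, S α ≤ (V : ℝ) - 2 := fun α =>
    dot_le_of_ne v' (v α) hv'pm (hpm α) (hv' α)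
  have hSge : ∀ α, -((V : ℝ) - 2) ≤ S α := by
    intro α
    have := hSle (σ α)
    rw [hSσ] at this
    linarith
  -- reindexing by σ
  have hreindex : ∀ f : Fin H → ℝ, ∑ α, f (σ α) = ∑ α, f α := by
    intro f
    have := Equiv.sum_comp hσinv.toPerm f
    simpa using this
  have hS0 : ∑ α, S α = 0 := by
    have h1 : ∑ α, S (σ α) = ∑ α, S α := hreindex S
    have h2 : ∑ α, S (σ α) = -∑ α, S α := by
      rw [← Finset.sum_neg_distrib]
      exact Finset.sum_congr rfl (fun α _ => hSσ α)
    linarith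
  -- energy in terms of overlaps
  have key : ∀ h : Fin H → ℝ,
      raEnergy A lam v v' h = ∑ α, (-(2 * A)) * (h α * (S α + lam α - (V : ℝ))) := by
    intro h
    unfold raEnergy
    rw [Finset.sum_comm, ← Finset.sum_neg_distrib, ← Finset.sum_sub_distrib]
    refine Finset.sum_congr rfl (fun α _ => ?_)
    have : ∑ j, v' j * (2 * A * v α j) * h α = 2 * A * h α * S α := by
      rw [hSdef, Finset.mul_sum]
      exact Finset.sum_congr rfl (fun j _ => by ring)
    rw [this]
    ring
  have hE0 : E0 = ∑ α, (-(2 * A)) * ((V : ℝ) - lam α) := by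
    simp only [E0, Finset.mul_sum]
    exact Finset.sum_congr rfl (fun α _ => by ring)
  constructor
  · intro h hh
    have hne1 : ∀ α, -1 ≤ h α ∧ h α ≤ 1 := by
      intro α; rcases hh α with h' | h' <;> rw [h'] <;> norm_num
    -- the quantity to bound
    set t : Fin H → ℝ := fun α => h α * S α + (h α + 1) * (5 / 4 - (V : ℝ)) with htdef
    have hpairs : ∀ α, t α + t (σ α) ≤ 0 := by
      intro α
      simp only [htdef]
      rw [hSσ]
      rcases hh α with h1 | h1 <;> rcases hh (σ α) with h2 | h2 <;>
        rw [h1, h2] <;> nlinarith [hSle α, hSge α]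
    have hT' : ∑ α, t α ≤ 0 := by
      have h2T : 2 * ∑ α, t α = ∑ α, (t α + t (σ α)) := by
        calc 2 * ∑ α, t α = ∑ α, t α + ∑ α, t (σ α) := by rw [hreindex t]; ring
          _ = ∑ α, (t α + t (σ α)) := Finset.sum_add_distrib.symm
      have : ∑ α, (t α + t (σ α)) ≤ 0 :=
        Finset.sum_nonpos (fun α _ => hpairs α)
      linarith
    have hT : ∑ α, (h α * S α + (h α + 1) * (lam α - (V : ℝ))) ≤ 0 := by
      refine le_trans (Finset.sum_le_sum (fun α _ => ?_)) hT'
      simp only [htdef]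
      have h1 : 0 ≤ h α + 1 := by linarith [(hne1 α).1]
      have h2 : lam α - (V : ℝ) ≤ 5 / 4 - (V : ℝ) := by linarith [(hlam α).2]
      nlinarith
    rw [key, hE0]
    rw [← sub_nonneg, ← Finset.sum_sub_distrib]
    have : ∑ α, ((-(2 * A)) * (h α * (S α + lam α - (V : ℝ))) - (-(2 * A)) * ((V : ℝ) - lam α))
        = (-(2 * A)) * ∑ α, (h α * S α + (h α + 1) * (lam α - (V : ℝ))) := by
      rw [Finset.mul_sum]
      exact Finset.sum_congr rfl (fun α _ => by ring)
    rw [this]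
    have := mul_nonpos_of_nonneg_of_nonpos (le_of_lt hA) hT
    nlinarith
  · rw [key, hE0, ← sub_eq_zero, ← Finset.sum_sub_distrib]
    have : ∑ α, ((-(2 * A)) * ((-1 : ℝ) * (S α + lam α - (V : ℝ))) - (-(2 * A)) * ((V : ℝ) - lam α))
        = (2 * A) * ∑ α, S α := by
      rw [Finset.mul_sum]
      exact Finset.sum_congr rfl (fun α _ => by ring)
    rw [this, hS0, mul_zero]
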